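/- Let L be a Lelek fan and let X be a smooth fan. Then there exists a continuous surjection f : L → X that is monotone on segments. In particular, every smooth fan is a continuous image of the Lelek fan. -/

import Mathlib

/-- The equivalence relation on `(ℕ → Bool) × [0,1]` identifying two points iff they are
equal or both have second coordinate `0`. -/
def CantorFanSetoid : Setoid ((ℕ → Bool) × unitInterval) where
  r p q := p = q ∨ (p.2 = 0 ∧ q.2 = 0)
  iseqv := by
    constructor
    · intro p; exact Or.inl rfl
    · rintro p q (h | h)
      · exact Or.inl h.symm
      · exact Or.inr ⟨h.2, h.1⟩
    · rintro p q r (h | h) (h' | h')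
      · exact Or.inl (h.trans h')
      · exact Or.inr ⟨by rw [h]; exact h'.1, h'.2⟩
      · exact Or.inr ⟨h.1, by rw [← h']; exact h.2⟩
      · exact Or.inr ⟨h.1, h'.2⟩

/-- The Cantor fan: the cone over the Cantor set `{0,1}^ℕ`, i.e. the quotient of
`{0,1}^ℕ × [0,1]` collapsing `{0,1}^ℕ × {0}` to a point. -/
def CantorFan : Type := Quotient CantorFanSetoid

instance : TopologicalSpace CantorFan := instTopologicalSpaceQuotient

/-- The top `v` of the Cantor fan. -/
def fanTop : CantorFan := Quotient.mk CantorFanSetoid (fun _ => false, 0)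

/-- `e` is an endpoint of `X ⊆ CantorFan` if `e ∈ X` and for every arc contained in `X`
and containing `e`, the point `e` is an endpoint of that arc. -/
def IsEndpoint (X : Set CantorFan) (e : CantorFan) : Prop :=
  e ∈ X ∧ ∀ h : unitInterval → CantorFan, Topology.IsEmbedding h →
    Set.range h ⊆ X → e ∈ Set.range h → e = h 0 ∨ e = h 1

/-- A Lelek fan: a nondegenerate subcontinuum of the Cantor fan whose set of endpoints
is dense in it. -/
def IsLelekFan (L : Set CantorFan) : Prop :=
  L.Nontrivial ∧ IsCompact L ∧ IsConnected L ∧ L ⊆ closure {e | IsEndpoint L e}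

/-- The segment `[v,x]` in the Cantor fan: if `x` is the class of `(c,t)`, it consists of
the classes of `(c,s)` for `0 ≤ s ≤ t`. -/
def fanSegment (x : CantorFan) : Set CantorFan :=
  {y | ∃ (c : ℕ → Bool) (t : unitInterval), Quotient.mk CantorFanSetoid (c, t) = x ∧
    ∃ s : unitInterval, s ≤ t ∧ y = Quotient.mk CantorFanSetoid (c, s)}

/-- A smooth fan: a nondegenerate subcontinuum of the Cantor fan that is not
homeomorphic to the unit interval. -/
def IsSmoothFan (X : Set CantorFan) : Prop :=
  X.Nontrivial ∧ IsCompact X ∧ IsConnected X ∧ ¬ Nonempty (↥X ≃ₜ ↥unitInterval)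

/-- A map `f : L → X` is monotone on segments if `f(v) = v` and the image of a point of
the segment `[v,y]` lies on the segment `[v,f(y)]`. -/
def MonotoneOnSegments (L X : Set CantorFan) (f : ↥L → ↥X) : Prop :=
  (∀ hv : fanTop ∈ L, (f ⟨fanTop, hv⟩ : CantorFan) = fanTop) ∧
  ∀ x y : ↥L, (x : CantorFan) ∈ fanSegment ↑y → (f x : CantorFan) ∈ fanSegment ↑(f y)

namespace CFanAux

open Set Function Topology Filter

abbrev mkF (p : (ℕ → Bool) × unitInterval) : CantorFan := Quotient.mk CantorFanSetoid p

lemma mk_eq_mk {p q : (ℕ → Bool) × unitInterval} :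
    mkF p = mkF q ↔ (p = q ∨ (p.2 = 0 ∧ q.2 = 0)) := by
  constructor
  · intro h; exact Quotient.exact h
  · intro h; exact Quotient.sound h

lemma continuous_mkF : Continuous mkF := continuous_quotient_mk'

lemma exists_rep (z : CantorFan) : ∃ c t, z = mkF (c, t) := by
  obtain ⟨⟨c, t⟩, h⟩ := Quotient.exists_rep z
  exact ⟨c, t, h.symm⟩

lemma mk_eq_top {c : ℕ → Bool} {t : unitInterval} : mkF (c, t) = fanTop ↔ t = 0 := by
  rw [show fanTop = mkF (fun _ => false, 0) from rfl, mk_eq_mk]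
  constructor
  · rintro (h | h)
    · exact congrArg Prod.snd h
    · exact h.1
  · intro h; exact Or.inr ⟨h, rfl⟩

/-- height function -/
noncomputable def ht : CantorFan → ℝ :=
  Quotient.lift (fun p : (ℕ → Bool) × unitInterval => (p.2 : ℝ)) (by
    rintro p q (rfl | ⟨h1, h2⟩)
    · rfl
    · simp [h1, h2])

@[simp] lemma ht_mk (c : ℕ → Bool) (t : unitInterval) : ht (mkF (c, t)) = (t : ℝ) := rfl

lemma continuous_ht : Continuous ht :=
  Continuous.quotient_lift (by exact continuous_subtype_val.comp continuous_snd) _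

lemma ht_nonneg (z : CantorFan) : 0 ≤ ht z := by
  obtain ⟨c, t, rfl⟩ := exists_rep z; exact t.2.1

lemma ht_le_one (z : CantorFan) : ht z ≤ 1 := by
  obtain ⟨c, t, rfl⟩ := exists_rep z; exact t.2.2

lemma ht_eq_zero_iff {z : CantorFan} : ht z = 0 ↔ z = fanTop := by
  obtain ⟨c, t, rfl⟩ := exists_rep z
  rw [ht_mk, mk_eq_top]
  exact ⟨fun h => Subtype.ext h, fun h => congrArg Subtype.val h⟩

/-- cylinder sets in Cantor space -/
def cyl (n : ℕ) (c : ℕ → Bool) : Set (ℕ → Bool) := {a | ∀ i < n, a i = c i}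

lemma self_mem_cyl (n : ℕ) (c : ℕ → Bool) : c ∈ cyl n c := fun _ _ => rfl

lemma isOpen_cyl (n : ℕ) (c : ℕ → Bool) : IsOpen (cyl n c) := by
  have : cyl n c = ⋂ i ∈ Finset.range n, {a : ℕ → Bool | a i = c i} := by
    ext a
    simp only [cyl, Set.mem_setOf_eq, Set.mem_iInter, Finset.mem_range]
  rw [this]
  refine isOpen_biInter_finset (fun i _ => ?_)
  have : {a : ℕ → Bool | a i = c i} = (fun a : ℕ → Bool => a i) ⁻¹' ({c i} : Set Bool) := by
    ext a; simp
  rw [this]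
  exact (continuous_apply i).isOpen_preimage _ (isOpen_discrete _)

lemma mem_cyl_symm {n : ℕ} {a c : ℕ → Bool} (h : a ∈ cyl n c) : c ∈ cyl n a :=
  fun i hi => (h i hi).symm

/-- every open set around a point contains a cylinder -/
lemma exists_cyl_subset {U : Set (ℕ → Bool)} (hU : IsOpen U) {a : ℕ → Bool} (ha : a ∈ U) :
    ∃ n, cyl n a ⊆ U := by
  obtain ⟨I, u, hu, hsub⟩ := isOpen_pi_iff.mp hU a ha
  classical
  refine ⟨(I.sup id) + 1, fun b hb => hsub ?_⟩
  intro i hi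
  have : b i = a i := hb i (Nat.lt_succ_of_le (Finset.le_sup (f := id) hi))
  rw [this]; exact (hu i hi).2

open scoped Classical in
/-- the function `z ↦ height of z` if base of `z` is in cylinder `cyl n c`, else 0 -/
noncomputable def gcyl (n : ℕ) (c : ℕ → Bool) : CantorFan → ℝ :=
  Quotient.lift (fun p : (ℕ → Bool) × unitInterval => if p.1 ∈ cyl n c then (p.2 : ℝ) else 0)
    (by
      rintro p q (rfl | ⟨h1, h2⟩)
      · rfl
      · simp [h1, h2])

open scoped Classical in
@[simp] lemma gcyl_mk (n : ℕ) (c a : ℕ → Bool) (t : unitInterval) :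
    gcyl n c (mkF (a, t)) = if a ∈ cyl n c then (t : ℝ) else 0 := rfl

open scoped Classical in
lemma continuous_gcyl (n : ℕ) (c : ℕ → Bool) : Continuous (gcyl n c) := by
  apply Continuous.quotient_lift
  have hχ : Continuous (fun a : ℕ → Bool => if a ∈ cyl n c then (1 : ℝ) else 0) := by
    apply IsLocallyConstant.continuous
    rw [IsLocallyConstant.iff_exists_open]
    intro a
    refine ⟨cyl (n) a, isOpen_cyl _ _, self_mem_cyl _ _, fun b hb => ?_⟩
    have : b ∈ cyl n c ↔ a ∈ cyl n c := by
      constructor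
      · intro h i hi; rw [← hb i hi]; exact h i hi
      · intro h i hi; rw [hb i hi]; exact h i hi
    simp only [this]
  have : (fun p : (ℕ → Bool) × unitInterval =>
      if p.1 ∈ cyl n c then (p.2 : ℝ) else 0) =
      (fun p : (ℕ → Bool) × unitInterval =>
        (if p.1 ∈ cyl n c then (1 : ℝ) else 0) * (p.2 : ℝ)) := by
    funext p
    by_cases h : p.1 ∈ cyl n c <;> simp [h]
  rw [this]
  exact ((hχ.comp continuous_fst).mul (continuous_subtype_val.comp continuous_snd))

open scoped Classical in
lemma gcyl_pos {n : ℕ} {c a : ℕ → Bool} {t : unitInterval} {r : ℝ} (hr : 0 < r)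
    (h : r ≤ gcyl n c (mkF (a, t))) : a ∈ cyl n c ∧ r ≤ (t : ℝ) := by
  rw [gcyl_mk] at h
  by_cases hm : a ∈ cyl n c
  · exact ⟨hm, by simpa [hm] using h⟩
  · simp only [hm, if_false] at h; linarith

instance : T2Space CantorFan := by
  constructor
  intro p q hne
  have key : ∃ g : CantorFan → ℝ, Continuous g ∧ g p ≠ g q := by
    obtain ⟨c, t, rfl⟩ := exists_rep p
    obtain ⟨c', t', rfl⟩ := exists_rep q
    by_cases hts : (t : ℝ) = (t' : ℝ)
    · -- same height, so height is nonzero and bases differ at some coordinate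
      have htt : t = t' := Subtype.ext hts
      subst htt
      have ht0 : t ≠ 0 := by
        intro h0
        exact hne (Quotient.sound (Or.inr ⟨h0, h0⟩))
      have hcc : c ≠ c' := by
        intro h; exact hne (by rw [h])
      obtain ⟨m, hm⟩ : ∃ m, c m ≠ c' m := by
        by_contra h
        push_neg at h
        exact hcc (funext h)
      classical
      refine ⟨gcyl (m+1) c, continuous_gcyl _ _, ?_⟩
      have h1 : gcyl (m+1) c (mkF (c, t)) = (t : ℝ) := by
        rw [gcyl_mk, if_pos (self_mem_cyl _ _)]
      have h2 : gcyl (m+1) c (mkF (c', t)) = 0 := by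
        rw [gcyl_mk, if_neg]
        intro hmem
        exact hm (hmem m (Nat.lt_succ_self m)).symm
      rw [h1, h2]
      intro h
      apply ht0
      apply Subtype.ext
      exact h
    · exact ⟨ht, continuous_ht, hts⟩
  obtain ⟨g, hg, hgne⟩ := key
  rcases lt_or_gt_of_ne hgne with h | h
  · exact ⟨g ⁻¹' (Set.Iio ((g p + g q)/2)), g ⁻¹' (Set.Ioi ((g p + g q)/2)),
      hg.isOpen_preimage _ isOpen_Iio, hg.isOpen_preimage _ isOpen_Ioi,
      by simp; linarith, by simp; linarith,
      Set.disjoint_left.mpr (fun z hz hz' => absurd (Set.mem_preimage.mp hz)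
        (by simp only [Set.mem_preimage, Set.mem_Ioi] at hz'; simp [Set.mem_Iio]; linarith))⟩
  · exact ⟨g ⁻¹' (Set.Ioi ((g p + g q)/2)), g ⁻¹' (Set.Iio ((g p + g q)/2)),
      hg.isOpen_preimage _ isOpen_Ioi, hg.isOpen_preimage _ isOpen_Iio,
      by simp; linarith, by simp; linarith,
      Set.disjoint_left.mpr (fun z hz hz' => absurd (Set.mem_preimage.mp hz)
        (by simp only [Set.mem_preimage, Set.mem_Iio] at hz'; simp [Set.mem_Ioi]; linarith))⟩

end CFanAux
namespace CFanAux

open Set Function Topology Filter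

open scoped Classical in
/-- height if the `n`-th bit of the base is `b`, else 0 -/
noncomputable def gbit (n : ℕ) (b : Bool) : CantorFan → ℝ :=
  Quotient.lift (fun p : (ℕ → Bool) × unitInterval => if p.1 n = b then (p.2 : ℝ) else 0)
    (by
      rintro p q (rfl | ⟨h1, h2⟩)
      · rfl
      · simp [h1, h2])

open scoped Classical in
lemma gbit_mk (n : ℕ) (b : Bool) (a : ℕ → Bool) (t : unitInterval) :
    gbit n b (mkF (a, t)) = if a n = b then (t : ℝ) else 0 := rfl

open scoped Classical in
lemma gbit_mk_pos {n : ℕ} {b : Bool} {a : ℕ → Bool} {t : unitInterval} (h : a n = b) :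
    gbit n b (mkF (a, t)) = (t : ℝ) := by rw [gbit_mk, if_pos h]

open scoped Classical in
lemma gbit_mk_neg {n : ℕ} {b : Bool} {a : ℕ → Bool} {t : unitInterval} (h : a n ≠ b) :
    gbit n b (mkF (a, t)) = 0 := by rw [gbit_mk, if_neg h]

open scoped Classical in
lemma continuous_gbit (n : ℕ) (b : Bool) : Continuous (gbit n b) := by
  apply Continuous.quotient_lift
  have hχ : Continuous (fun a : ℕ → Bool => if a n = b then (1 : ℝ) else 0) := by
    have : (fun a : ℕ → Bool => if a n = b then (1 : ℝ) else 0) =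
        (fun x : Bool => if x = b then (1 : ℝ) else 0) ∘ (fun a : ℕ → Bool => a n) := rfl
    rw [this]
    exact (continuous_of_discreteTopology).comp (continuous_apply n)
  have : (fun p : (ℕ → Bool) × unitInterval => if p.1 n = b then (p.2 : ℝ) else 0) =
      (fun p : (ℕ → Bool) × unitInterval =>
        (if p.1 n = b then (1 : ℝ) else 0) * (p.2 : ℝ)) := by
    funext p
    by_cases h : p.1 n = b <;> simp [h]
  rw [this]
  exact ((hχ.comp continuous_fst).mul (continuous_subtype_val.comp continuous_snd))

/-- basic saturated neighborhoods at a point of positive height -/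
lemma nhds_cyl_ball {U : Set CantorFan} (hU : IsOpen U) {a : ℕ → Bool} {s : unitInterval}
    (hmem : mkF (a, s) ∈ U) :
    ∃ n ε, 0 < ε ∧ ∀ (b : ℕ → Bool) (u : unitInterval),
      b ∈ cyl n a → |(u : ℝ) - (s : ℝ)| < ε → mkF (b, u) ∈ U := by
  have hV : IsOpen (mkF ⁻¹' U) := hU.preimage continuous_mkF
  have hmemV : (a, s) ∈ mkF ⁻¹' U := hmem
  have hnh : (mkF ⁻¹' U) ∈ nhds ((a, s) : (ℕ → Bool) × unitInterval) := hV.mem_nhds hmemV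
  rw [mem_nhds_prod_iff'] at hnh
  obtain ⟨U₁, U₂, hU₁, haU₁, hU₂, hsU₂, hprod⟩ := hnh
  obtain ⟨n, hn⟩ := exists_cyl_subset hU₁ haU₁
  obtain ⟨ε, hε, hball⟩ := Metric.isOpen_iff.mp hU₂ s hsU₂
  refine ⟨n, ε, hε, fun b u hb hu => ?_⟩
  have h1 : b ∈ U₁ := hn hb
  have h2 : u ∈ U₂ := by
    apply hball
    rw [Metric.mem_ball, Subtype.dist_eq, Real.dist_eq]
    exact hu
  exact hprod (Set.mk_mem_prod h1 h2)

/-- if all points of a preconnected set have height bounded below by a positive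
number, all points lie on a single leg -/
lemma base_const {T : Set CantorFan} (hT : IsPreconnected T) {m : ℝ} (hm : 0 < m)
    (hpos : ∀ z ∈ T, m ≤ ht z) {a₀ : ℕ → Bool} {t₀ : unitInterval}
    (h0 : mkF (a₀, t₀) ∈ T) :
    ∀ z ∈ T, ∃ u : unitInterval, m ≤ (u : ℝ) ∧ z = mkF (a₀, u) := by
  have key : ∀ n : ℕ, ∀ z ∈ T, ∀ b (u : unitInterval), z = mkF (b, u) → b n = a₀ n := by
    intro n
    by_contra hcon
    push_neg at hcon
    obtain ⟨z₂, hz₂T, b₂, u₂, hz₂, hb₂⟩ := hcon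
    have hO : ∀ (c : Bool), IsOpen {z | 0 < gbit n c z} := fun c =>
      (continuous_gbit n c).isOpen_preimage (Set.Ioi 0) isOpen_Ioi
    have hcover : T ⊆ {z | 0 < gbit n (a₀ n) z} ∪ {z | 0 < gbit n (!(a₀ n)) z} := by
      intro z hz
      obtain ⟨b, u, rfl⟩ := exists_rep z
      have hu : m ≤ (u : ℝ) := hpos _ hz
      rcases Bool.eq_or_eq_not (b n) (a₀ n) with h | h
      · left
        show 0 < gbit n (a₀ n) (mkF (b, u))
        rw [gbit_mk_pos h]; linarith
      · right
        show 0 < gbit n (!(a₀ n)) (mkF (b, u))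
        rw [gbit_mk_pos h]; linarith
    have hne1 : (T ∩ {z | 0 < gbit n (a₀ n) z}).Nonempty := by
      refine ⟨mkF (a₀, t₀), h0, ?_⟩
      have := hpos _ h0
      rw [ht_mk] at this
      show 0 < gbit n (a₀ n) (mkF (a₀, t₀))
      rw [gbit_mk_pos rfl]
      linarith
    have hne2 : (T ∩ {z | 0 < gbit n (!(a₀ n)) z}).Nonempty := by
      refine ⟨z₂, hz₂T, ?_⟩
      have hu : m ≤ (u₂ : ℝ) := by
        have := hpos _ hz₂T
        rw [hz₂, ht_mk] at this
        exact this
      have hb : b₂ n = !(a₀ n) := Bool.eq_not_of_ne hb₂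
      rw [hz₂]
      show 0 < gbit n (!(a₀ n)) (mkF (b₂, u₂))
      rw [gbit_mk_pos hb]
      linarith
    obtain ⟨z₃, hz₃T, hz₃1, hz₃2⟩ := hT _ _ (hO (a₀ n)) (hO (!(a₀ n))) hcover hne1 hne2
    obtain ⟨b₃, u₃, rfl⟩ := exists_rep z₃
    by_cases h : b₃ n = a₀ n
    · have : gbit n (!(a₀ n)) (mkF (b₃, u₃)) = 0 := by
        apply gbit_mk_neg
        rw [h]
        simp
      rw [Set.mem_setOf_eq, this] at hz₃2
      exact lt_irrefl _ hz₃2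
    · have : gbit n (a₀ n) (mkF (b₃, u₃)) = 0 := gbit_mk_neg h
      rw [Set.mem_setOf_eq, this] at hz₃1
      exact lt_irrefl _ hz₃1
  intro z hz
  obtain ⟨b, u, rfl⟩ := exists_rep z
  have hb : b = a₀ := funext fun n => key n _ hz b u rfl
  refine ⟨u, ?_, by rw [hb]⟩
  have := hpos _ hz
  rw [ht_mk] at this
  exact this

end CFanAux
namespace CFanAux

open Set Function Topology Filter

open scoped Classical in
lemma gcyl_mk_pos {n : ℕ} {c a : ℕ → Bool} {t : unitInterval} (h : a ∈ cyl n c) :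
    gcyl n c (mkF (a, t)) = (t : ℝ) := by rw [gcyl_mk, if_pos h]

open scoped Classical in
lemma gcyl_mk_neg {n : ℕ} {c a : ℕ → Bool} {t : unitInterval} (h : a ∉ cyl n c) :
    gcyl n c (mkF (a, t)) = 0 := by rw [gcyl_mk, if_neg h]

/-- Key structure lemma: a subcontinuum of the Cantor fan that is not contained in a
single leg (bounded away from the top) is closed under going down segments. -/
lemma seg_closed {T : Set CantorFan} (hcpt : IsCompact T) (hconn : IsConnected T)
    (hnl : ¬ ∃ (a : ℕ → Bool) (m : ℝ), 0 < m ∧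
      ∀ z ∈ T, ∃ u : unitInterval, m ≤ (u : ℝ) ∧ z = mkF (a, u))
    {a : ℕ → Bool} {t s : unitInterval} (hmem : mkF (a, t) ∈ T) (hst : s ≤ t) :
    mkF (a, s) ∈ T := by
  by_contra hns
  have hTc : IsClosed T := hcpt.isClosed
  have hstlt : (s : ℝ) < (t : ℝ) := by
    rcases lt_or_eq_of_le hst with h | h
    · exact h
    · exact absurd (h ▸ hmem) hns
  rcases eq_or_lt_of_le s.2.1 with h0 | hs0
  · -- s = 0 case
    have hseq : ∀ z : CantorFan, ht z = 0 → z = mkF (a, s) := by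
      intro z hz
      rw [ht_eq_zero_iff] at hz
      rw [hz]
      symm
      rw [mk_eq_top]
      exact Subtype.ext h0.symm
    have hcptI : IsCompact (ht '' T) := hcpt.image continuous_ht
    have hneI : (ht '' T).Nonempty := ⟨_, ⟨_, hmem, rfl⟩⟩
    have h0nI : (0 : ℝ) ∉ ht '' T := by
      rintro ⟨z, hzT, hz0⟩
      exact hns (hseq z hz0 ▸ hzT)
    have hm : sInf (ht '' T) ∈ ht '' T := hcptI.sInf_mem hneI
    have hge : 0 ≤ sInf (ht '' T) := by
      obtain ⟨z, hzT, hz⟩ := hm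
      rw [← hz]
      exact ht_nonneg z
    have hmpos : 0 < sInf (ht '' T) := hge.lt_of_ne (fun h => h0nI (h ▸ hm))
    have hlow : ∀ z ∈ T, sInf (ht '' T) ≤ ht z := fun z hz =>
      csInf_le hcptI.bddBelow ⟨z, hz, rfl⟩
    exact hnl ⟨a, sInf (ht '' T), hmpos,
      base_const hconn.isPreconnected hmpos hlow hmem⟩
  · -- 0 < s case
    obtain ⟨n, ε₀, hε₀, hball⟩ := nhds_cyl_ball hTc.isOpen_compl
      (show mkF (a, s) ∈ Tᶜ from hns)
    set ε := min ε₀ (min (((t : ℝ) - s) / 2) ((s : ℝ) / 2)) with hεdef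
    have hεpos : 0 < ε := lt_min hε₀ (lt_min (by linarith) (by linarith))
    have hεle : ε ≤ ε₀ := min_le_left _ _
    have hεle2 : ε ≤ ((t : ℝ) - s) / 2 := le_trans (min_le_right _ _) (min_le_left _ _)
    have hεle3 : ε ≤ (s : ℝ) / 2 := le_trans (min_le_right _ _) (min_le_right _ _)
    have hnoband : ∀ z ∈ T, gcyl n a z ∉ Set.Ioo ((s : ℝ) - ε) ((s : ℝ) + ε) := by
      rintro z hzT ⟨hlo, hhi⟩
      obtain ⟨b, u, rfl⟩ := exists_rep z
      by_cases hb : b ∈ cyl n a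
      · rw [gcyl_mk_pos hb] at hlo hhi
        exact hball b u hb (abs_lt.mpr ⟨by linarith, by linarith⟩) hzT
      · rw [gcyl_mk_neg hb] at hlo
        linarith
    have hO1 : IsOpen (gcyl n a ⁻¹' Set.Ioi (s : ℝ)) :=
      (continuous_gcyl n a).isOpen_preimage _ isOpen_Ioi
    have hO2 : IsOpen (gcyl n a ⁻¹' Set.Iio (s : ℝ)) :=
      (continuous_gcyl n a).isOpen_preimage _ isOpen_Iio
    have hcover : T ⊆ gcyl n a ⁻¹' Set.Ioi (s : ℝ) ∪ gcyl n a ⁻¹' Set.Iio (s : ℝ) := by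
      intro z hz
      rcases lt_trichotomy (gcyl n a z) (s : ℝ) with h | h | h
      · right; exact h
      · exact absurd ⟨by linarith, by linarith⟩ (hnoband z hz)
      · left; exact h
    have hne1 : (T ∩ gcyl n a ⁻¹' Set.Ioi (s : ℝ)).Nonempty := by
      refine ⟨mkF (a, t), hmem, ?_⟩
      show gcyl n a (mkF (a, t)) ∈ Set.Ioi (s : ℝ)
      rw [Set.mem_Ioi, gcyl_mk_pos (self_mem_cyl n a)]
      exact hstlt
    by_cases hne2 : (T ∩ gcyl n a ⁻¹' Set.Iio (s : ℝ)).Nonempty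
    · obtain ⟨z₃, _, h1, h2⟩ :=
        hconn.isPreconnected _ _ hO1 hO2 hcover hne1 hne2
      rw [Set.mem_preimage, Set.mem_Ioi] at h1
      rw [Set.mem_preimage, Set.mem_Iio] at h2
      linarith
    · have hht : ∀ z ∈ T, (s : ℝ) + ε ≤ ht z := by
        intro z hz
        have hnb := hnoband z hz
        have hnlt : ¬ gcyl n a z < (s : ℝ) := fun hlt => hne2 ⟨z, hz, hlt⟩
        push_neg at hnlt
        have hlow : (s : ℝ) + ε ≤ gcyl n a z := by
          by_contra hc
          push_neg at hc
          exact hnb ⟨by linarith, hc⟩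
        obtain ⟨b, u, rfl⟩ := exists_rep z
        by_cases hb : b ∈ cyl n a
        · rw [gcyl_mk_pos hb] at hlow
          rw [ht_mk]
          exact hlow
        · rw [gcyl_mk_neg hb] at hlow
          exfalso
          linarith
      exact hnl ⟨a, (s : ℝ) + ε, by linarith,
        base_const hconn.isPreconnected (by linarith) hht hmem⟩

end CFanAux

namespace CFanAux

open Set Function Topology Filter

section Arc

variable {a : ℕ → Bool} {α β : ℝ}

/-- the affine point of the leg over `a` -/
noncomputable def legPt (a : ℕ → Bool) (hα : 0 ≤ α) (hαβ : α < β) (hβ : β ≤ 1)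
    (r : unitInterval) : CantorFan :=
  mkF (a, ⟨α + r * (β - α), by
    constructor
    · have := r.2.1
      nlinarith
    · have h1 : (r : ℝ) * (β - α) ≤ 1 * (β - α) :=
        mul_le_mul_of_nonneg_right r.2.2 (by linarith)
      nlinarith⟩)

lemma legPt_continuous (hα : 0 ≤ α) (hαβ : α < β) (hβ : β ≤ 1) :
    Continuous (legPt a hα hαβ hβ) := by
  apply continuous_mkF.comp
  apply Continuous.comp (Continuous.prodMk_right a)
  exact Continuous.subtype_mk
    (continuous_const.add (continuous_subtype_val.mul continuous_const)) _

lemma legPt_injective (hα : 0 ≤ α) (hαβ : α < β) (hβ : β ≤ 1) :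
    Function.Injective (legPt a hα hαβ hβ) := by
  intro r r' h
  unfold legPt at h
  rcases mk_eq_mk.mp h with h | ⟨h1, h2⟩
  · have : α + (r : ℝ) * (β - α) = α + (r' : ℝ) * (β - α) := by
      have := congrArg Prod.snd h
      exact congrArg Subtype.val this
    have hβα : β - α ≠ 0 := by linarith
    apply Subtype.ext
    exact mul_right_cancel₀ hβα (by linarith : (r : ℝ) * (β - α) = (r' : ℝ) * (β - α))
  · have e1 : α + (r : ℝ) * (β - α) = 0 := congrArg Subtype.val h1
    have e2 : α + (r' : ℝ) * (β - α) = 0 := congrArg Subtype.val h2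
    have hr0 : (r : ℝ) = 0 := by nlinarith [r.2.1, r'.2.1]
    have hr'0 : (r' : ℝ) = 0 := by nlinarith [r.2.1, r'.2.1]
    apply Subtype.ext
    rw [hr0, hr'0]

lemma legPt_isEmbedding (hα : 0 ≤ α) (hαβ : α < β) (hβ : β ≤ 1) :
    Topology.IsEmbedding (legPt a hα hαβ hβ) :=
  ((legPt_continuous hα hαβ hβ).isClosedEmbedding (legPt_injective hα hαβ hβ)).toIsEmbedding

lemma legPt_val (hα : 0 ≤ α) (hαβ : α < β) (hβ : β ≤ 1) {u : unitInterval}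
    (h1 : α ≤ (u : ℝ)) (h2 : (u : ℝ) ≤ β) :
    legPt a hα hαβ hβ ⟨((u : ℝ) - α) / (β - α), by
        constructor
        · apply div_nonneg (by linarith) (by linarith)
        · rw [div_le_one (by linarith)]; linarith⟩ = mkF (a, u) := by
  unfold legPt
  exact congrArg (fun v : unitInterval => mkF (a, v)) (Subtype.ext (by
    show α + ((u : ℝ) - α) / (β - α) * (β - α) = (u : ℝ)
    rw [div_mul_cancel₀ _ (by linarith : β - α ≠ 0)]
    ring))

/-- a point strictly inside a free arc of a leg is not an endpoint -/
lemma not_endpoint_middle {L : Set CantorFan} (hα : 0 ≤ α) (hαβ : α < β) (hβ : β ≤ 1)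
    (hrange : ∀ u : unitInterval, α ≤ (u : ℝ) → (u : ℝ) ≤ β → mkF (a, u) ∈ L)
    {w : unitInterval} (hw1 : α < (w : ℝ)) (hw2 : (w : ℝ) < β) :
    ¬ IsEndpoint L (mkF (a, w)) := by
  rintro ⟨-, hE⟩
  have hrange' : Set.range (legPt a hα hαβ hβ) ⊆ L := by
    rintro z ⟨r, rfl⟩
    apply hrange
    · show α ≤ α + (r : ℝ) * (β - α)
      nlinarith [r.2.1]
    · show α + (r : ℝ) * (β - α) ≤ β
      nlinarith [r.2.2]
  have hmem : mkF (a, w) ∈ Set.range (legPt a hα hαβ hβ) :=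
    ⟨_, legPt_val hα hαβ hβ (le_of_lt hw1) (le_of_lt hw2)⟩
  rcases hE _ (legPt_isEmbedding hα hαβ hβ) hrange' hmem with h | h
  · rcases mk_eq_mk.mp h with h' | ⟨h1, h2⟩
    · have : (w : ℝ) = α + 0 * (β - α) := by
        have := congrArg Subtype.val (congrArg Prod.snd h')
        simpa using this
      simp at this
      linarith
    · have : (w : ℝ) = 0 := congrArg Subtype.val h1
      linarith
  · rcases mk_eq_mk.mp h with h' | ⟨h1, h2⟩
    · have : (w : ℝ) = α + 1 * (β - α) := by
        have := congrArg Subtype.val (congrArg Prod.snd h')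
        simpa using this
      simp at this
      linarith
    · have : (w : ℝ) = 0 := congrArg Subtype.val h1
      linarith

end Arc

/-- structure of a compact connected set contained in a single leg -/
lemma leg_interval {T : Set CantorFan} (hcpt : IsCompact T) (hconn : IsConnected T)
    {a : ℕ → Bool} {m : ℝ} (hm : 0 < m)
    (hleg : ∀ z ∈ T, ∃ u : unitInterval, m ≤ (u : ℝ) ∧ z = mkF (a, u)) :
    ∃ m' M' : ℝ, m ≤ m' ∧ m' ≤ M' ∧ M' ≤ 1 ∧
      (∀ z ∈ T, m' ≤ ht z ∧ ht z ≤ M') ∧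
      (∀ u : unitInterval, m' ≤ (u : ℝ) → (u : ℝ) ≤ M' → mkF (a, u) ∈ T) := by
  have hne : T.Nonempty := hconn.nonempty
  set S := ht '' T with hS
  have hcptS : IsCompact S := hcpt.image continuous_ht
  have hneS : S.Nonempty := hne.image _
  have hconnS : IsPreconnected S :=
    hconn.isPreconnected.image ht continuous_ht.continuousOn
  have hsInf : sInf S ∈ S := hcptS.sInf_mem hneS
  have hsSup : sSup S ∈ S := hcptS.sSup_mem hneS
  have hIcc : Set.Icc (sInf S) (sSup S) ⊆ S := hconnS.Icc_subset hsInf hsSup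
  have hSIcc : S ⊆ Set.Icc (sInf S) (sSup S) := fun x hx =>
    ⟨csInf_le hcptS.bddBelow hx, le_csSup hcptS.bddAbove hx⟩
  refine ⟨sInf S, sSup S, ?_, ?_, ?_, ?_, ?_⟩
  · obtain ⟨z, hz, hzeq⟩ := hsInf
    obtain ⟨u, hu, rfl⟩ := hleg z hz
    rw [← hzeq, ht_mk]
    exact hu
  · obtain ⟨z, hz, hzeq⟩ := hsInf
    exact le_csSup hcptS.bddAbove ⟨z, hz, hzeq⟩
  · obtain ⟨z, hz, hzeq⟩ := hsSup
    rw [← hzeq]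
    exact ht_le_one z
  · intro z hz
    exact ⟨csInf_le hcptS.bddBelow ⟨z, hz, rfl⟩, le_csSup hcptS.bddAbove ⟨z, hz, rfl⟩⟩
  · intro u h1 h2
    have : (u : ℝ) ∈ S := hIcc ⟨h1, h2⟩
    obtain ⟨z, hzT, hzeq⟩ := this
    obtain ⟨u', hu', rfl⟩ := hleg z hzT
    have : u' = u := Subtype.ext (by rw [← hzeq, ht_mk])
    rw [← this]
    exact hzT

/-- a nontrivial compact connected set on one leg gives two distinct heights -/
lemma leg_lt {T : Set CantorFan} (hnt : T.Nontrivial)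
    {a : ℕ → Bool} {m : ℝ}
    (hleg : ∀ z ∈ T, ∃ u : unitInterval, m ≤ (u : ℝ) ∧ z = mkF (a, u))
    (hm : 0 < m)
    {m' M' : ℝ} (hbounds : ∀ z ∈ T, m' ≤ ht z ∧ ht z ≤ M') (hmm' : m ≤ m') :
    m' < M' := by
  obtain ⟨z₁, hz₁, z₂, hz₂, hne⟩ := hnt
  obtain ⟨u₁, hu₁, rfl⟩ := hleg z₁ hz₁
  obtain ⟨u₂, hu₂, rfl⟩ := hleg z₂ hz₂
  have hu : (u₁ : ℝ) ≠ (u₂ : ℝ) := by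
    intro h
    exact hne (by rw [Subtype.ext h])
  have b₁ := hbounds _ hz₁
  have b₂ := hbounds _ hz₂
  rw [ht_mk] at b₁ b₂
  rcases lt_or_gt_of_ne hu with h | h
  · calc m' ≤ (u₁ : ℝ) := b₁.1
      _ < (u₂ : ℝ) := h
      _ ≤ M' := b₂.2
  · calc m' ≤ (u₂ : ℝ) := b₂.1
      _ < (u₁ : ℝ) := h
      _ ≤ M' := b₁.2

/-- a smooth fan is not contained in a single leg -/
lemma notleg_of_not_homeo {X : Set CantorFan} (hnt : X.Nontrivial) (hcpt : IsCompact X)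
    (hconn : IsConnected X) (hnh : ¬ Nonempty (↥X ≃ₜ ↥unitInterval)) :
    ¬ ∃ (a : ℕ → Bool) (m : ℝ), 0 < m ∧
      ∀ z ∈ X, ∃ u : unitInterval, m ≤ (u : ℝ) ∧ z = mkF (a, u) := by
  rintro ⟨a, m, hm, hleg⟩
  obtain ⟨m', M', hmm', hm'M', hM'1, hbounds, hpts⟩ := leg_interval hcpt hconn hm hleg
  have hlt : m' < M' := leg_lt hnt hleg hm hbounds hmm'
  apply hnh
  have hmemIcc : ∀ z : ↥X, ht z.1 ∈ Set.Icc m' M' := fun z => hbounds z.1 z.2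
  let φ : ↥X → ↥(Set.Icc m' M') := fun z => ⟨ht z.1, hmemIcc z⟩
  have hφc : Continuous φ :=
    Continuous.subtype_mk (continuous_ht.comp continuous_subtype_val) _
  have hφbij : Function.Bijective φ := by
    constructor
    · intro z z' h
      obtain ⟨u, hu, hz⟩ := hleg z.1 z.2
      obtain ⟨u', hu', hz'⟩ := hleg z'.1 z'.2
      have : (u : ℝ) = (u' : ℝ) := by
        have := congrArg Subtype.val h
        show (u:ℝ) = (u':ℝ)
        calc (u:ℝ) = ht z.1 := by rw [hz, ht_mk]
          _ = ht z'.1 := this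
          _ = (u':ℝ) := by rw [hz', ht_mk]
      apply Subtype.ext
      rw [hz, hz', Subtype.ext this]
    · rintro ⟨u, hu1, hu2⟩
      have humem : (u : ℝ) ∈ unitInterval := ⟨by linarith, by linarith⟩
      refine ⟨⟨mkF (a, ⟨u, humem⟩), hpts _ hu1 hu2⟩, ?_⟩
      apply Subtype.ext
      show ht (mkF (a, ⟨u, humem⟩)) = u
      rw [ht_mk]
  haveI : CompactSpace ↥X := isCompact_iff_compactSpace.mp hcpt
  have e : ↥X ≃ₜ ↥(Set.Icc m' M') :=
    Continuous.homeoOfEquivCompactToT2 (f := Equiv.ofBijective φ hφbij) hφc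
  exact ⟨e.trans (iccHomeoI m' M' hlt)⟩

/-- a continuum with dense endpoints is not contained in a single leg -/
lemma notleg_of_dense_endpoints {L : Set CantorFan} (hnt : L.Nontrivial)
    (hcpt : IsCompact L) (hconn : IsConnected L)
    (hdense : L ⊆ closure {e | IsEndpoint L e}) :
    ¬ ∃ (a : ℕ → Bool) (m : ℝ), 0 < m ∧
      ∀ z ∈ L, ∃ u : unitInterval, m ≤ (u : ℝ) ∧ z = mkF (a, u) := by
  rintro ⟨a, m, hm, hleg⟩
  obtain ⟨m', M', hmm', hm'M', hM'1, hbounds, hpts⟩ := leg_interval hcpt hconn hm hleg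
  have hlt : m' < M' := leg_lt hnt hleg hm hbounds hmm'
  set u₀ : ℝ := (m' + M') / 2 with hu₀
  have hu₀m : (u₀ : ℝ) ∈ unitInterval := ⟨by linarith, by linarith⟩
  have hz₀ : mkF (a, ⟨u₀, hu₀m⟩) ∈ L := hpts _ (by simp [hu₀]; linarith) (by simp [hu₀]; linarith)
  set ρ := (M' - m') / 4 with hρ
  have hρpos : 0 < ρ := by simp [hρ]; linarith
  have hW : IsOpen (ht ⁻¹' Set.Ioo (u₀ - ρ) (u₀ + ρ)) :=
    continuous_ht.isOpen_preimage _ isOpen_Ioo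
  have hz₀W : mkF (a, ⟨u₀, hu₀m⟩) ∈ ht ⁻¹' Set.Ioo (u₀ - ρ) (u₀ + ρ) := by
    show ht _ ∈ Set.Ioo _ _
    rw [ht_mk]
    constructor <;> [linarith; linarith]
  obtain ⟨e, heW, heE⟩ := mem_closure_iff.mp (hdense hz₀) _ hW hz₀W
  have heL : e ∈ L := heE.1
  obtain ⟨ue, hue, rfl⟩ := hleg e heL
  rw [Set.mem_preimage, ht_mk] at heW
  have h1 : m' < (ue : ℝ) := by
    have := heW.1
    simp only [hu₀, hρ] at this ⊢
    linarith
  have h2 : (ue : ℝ) < M' := by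
    have := heW.2
    simp only [hu₀, hρ] at this ⊢
    linarith
  exact not_endpoint_middle (by linarith : (0:ℝ) ≤ m') hlt hM'1
    (fun u hu1 hu2 => hpts u hu1 hu2) h1 h2 heE

end CFanAux
namespace CFanAux

open Set Function Topology Filter

/-- In a fan with dense endpoints, the set of bases of legs taller than δ is preperfect -/
lemma tall_preperfect {L : Set CantorFan}
    (hdense : L ⊆ closure {e | IsEndpoint L e})
    (hsegL : ∀ (a : ℕ → Bool) (t s : unitInterval), mkF (a, t) ∈ L → s ≤ t → mkF (a, s) ∈ L)
    {δ : ℝ} (hδ : 0 < δ) :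
    Preperfect {c : ℕ → Bool | ∃ t : unitInterval, δ < (t : ℝ) ∧ mkF (c, t) ∈ L} := by
  intro c hc
  rw [accPt_iff_nhds]
  intro U hU
  obtain ⟨t, ht0, htL⟩ := hc
  obtain ⟨V, hVU, hVopen, hcV⟩ := mem_nhds_iff.mp hU
  obtain ⟨n, hcyl⟩ := exists_cyl_subset hVopen hcV
  set d : ℝ := ((t : ℝ) - δ) / 9 with hd
  have hdpos : 0 < d := by simp only [hd]; linarith
  set u₁ : ℝ := δ + 3 * d with hu₁
  set u₂ : ℝ := δ + 6 * d with hu₂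
  have ht1 : (t : ℝ) ≤ 1 := t.2.2
  have hu₁m : u₁ ∈ unitInterval := ⟨by simp only [hu₁]; linarith, by simp only [hu₁, hd]; linarith⟩
  have hu₂m : u₂ ∈ unitInterval := ⟨by simp only [hu₂]; linarith, by simp only [hu₂, hd]; linarith⟩
  have hq₁ : mkF (c, ⟨u₁, hu₁m⟩) ∈ L := hsegL c t _ htL (by
    show u₁ ≤ (t : ℝ)
    simp only [hu₁, hd]; linarith)
  have hq₂ : mkF (c, ⟨u₂, hu₂m⟩) ∈ L := hsegL c t _ htL (by
    show u₂ ≤ (t : ℝ)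
    simp only [hu₂, hd]; linarith)
  -- find endpoints close to the two auxiliary points
  have hfind : ∀ (u : ℝ) (hum : u ∈ unitInterval), δ + 2*d ≤ u → mkF (c, ⟨u, hum⟩) ∈ L →
      ∃ (b : ℕ → Bool) (v : unitInterval), IsEndpoint L (mkF (b, v)) ∧
        b ∈ cyl n c ∧ u - d < (v : ℝ) ∧ (v : ℝ) < u + d := by
    intro u hum hu hmem
    have hW : IsOpen {z | gcyl n c z ∈ Set.Ioo (u - d) (u + d)} :=
      (continuous_gcyl n c).isOpen_preimage _ isOpen_Ioo
    have hqW : mkF (c, ⟨u, hum⟩) ∈ {z | gcyl n c z ∈ Set.Ioo (u - d) (u + d)} := by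
      simp only [Set.mem_setOf_eq]
      rw [gcyl_mk_pos (self_mem_cyl n c)]
      exact ⟨by linarith, by linarith⟩
    obtain ⟨e, heW, heE⟩ := mem_closure_iff.mp (hdense hmem) _ hW hqW
    obtain ⟨b, v, rfl⟩ := exists_rep e
    rw [Set.mem_setOf_eq] at heW
    by_cases hb : b ∈ cyl n c
    · rw [gcyl_mk_pos hb] at heW
      exact ⟨b, v, heE, hb, heW.1, heW.2⟩
    · rw [gcyl_mk_neg hb] at heW
      exact absurd heW.1 (by linarith)
  obtain ⟨b₁, v₁, hE₁, hb₁, hv₁l, hv₁u⟩ :=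
    hfind u₁ hu₁m (by simp only [hu₁]; linarith) hq₁
  obtain ⟨b₂, v₂, hE₂, hb₂, hv₂l, hv₂u⟩ :=
    hfind u₂ hu₂m (by simp only [hu₂]; linarith) hq₂
  have hδv₁ : δ < (v₁ : ℝ) := by simp only [hu₁] at hv₁l; linarith
  have hδv₂ : δ < (v₂ : ℝ) := by simp only [hu₂] at hv₂l; linarith
  by_cases hc₁ : b₁ = c
  · by_cases hc₂ : b₂ = c
    · -- two endpoints on the same leg: contradiction
      exfalso
      rw [hc₁] at hE₁
      rw [hc₂] at hE₂
      have hv₁₂ : (v₁ : ℝ) < (v₂ : ℝ) := by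
        simp only [hu₁] at hv₁u
        simp only [hu₂] at hv₂l
        linarith
      have hv₂pos : 0 < (v₂ : ℝ) := by linarith
      refine not_endpoint_middle (le_refl (0:ℝ)) hv₂pos v₂.2.2 ?_ (by linarith) hv₁₂ hE₁
      intro u hu0 huv
      exact hsegL c v₂ u hE₂.1 huv
    · exact ⟨b₂, ⟨hVU (hcyl hb₂), v₂, hδv₂, hE₂.1⟩, hc₂⟩
  · exact ⟨b₁, ⟨hVU (hcyl hb₁), v₁, hδv₁, hE₁.1⟩, hc₁⟩

end CFanAux
namespace CFanAux

open Set Function Topology Filter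

section Retract

variable (Z : Set (ℕ → Bool))

open scoped Classical in
/-- whether some element of `Z` extends the finite prefix `l` -/
def Matches (l : List Bool) : Prop := ∃ z ∈ Z, ∀ i < l.length, z i = l.getD i false

open scoped Classical in
noncomputable def prefixOf (x : ℕ → Bool) : ℕ → List Bool
  | 0 => []
  | n + 1 =>
      prefixOf x n ++ [if Matches Z ((prefixOf x n) ++ [x n]) then x n else !(x n)]

noncomputable def retr (x : ℕ → Bool) : ℕ → Bool :=
  fun n => (prefixOf Z x (n + 1)).getD n false

lemma length_prefixOf (x : ℕ → Bool) : ∀ n, (prefixOf Z x n).length = n := by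
  intro n
  induction n with
  | zero => rfl
  | succ n ih => simp [prefixOf, ih]

lemma prefixOf_getD (x : ℕ → Bool) {i n : ℕ} (h : i < n) :
    (prefixOf Z x n).getD i false = retr Z x i := by
  induction n with
  | zero => omega
  | succ n ih =>
    rcases Nat.lt_succ_iff_lt_or_eq.mp h with h' | h'
    · rw [show prefixOf Z x (n+1) = prefixOf Z x n ++ [_] from rfl]
      rw [List.getD_append _ _ _ _ (by rw [length_prefixOf]; exact h')]
      exact ih h'
    · subst h'
      rfl

lemma matches_prefixOf (hne : Z.Nonempty) (x : ℕ → Bool) :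
    ∀ n, Matches Z (prefixOf Z x n) := by
  intro n
  induction n with
  | zero => obtain ⟨z, hz⟩ := hne; exact ⟨z, hz, by simp [prefixOf]⟩
  | succ n ih =>
    by_cases hM : Matches Z ((prefixOf Z x n) ++ [x n])
    · rw [show prefixOf Z x (n+1) = prefixOf Z x n ++ [x n] from by
        simp only [prefixOf, if_pos hM]]
      exact hM
    · obtain ⟨z, hzZ, hz⟩ := ih
      have hbit : z n = !(x n) := by
        rcases Bool.eq_or_eq_not (z n) (x n) with h | h
        · exfalso
          apply hM
          refine ⟨z, hzZ, fun i hi => ?_⟩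
          rw [List.length_append, length_prefixOf] at hi
          simp only [List.length_singleton] at hi
          rcases Nat.lt_succ_iff_lt_or_eq.mp (by omega : i < n + 1) with h' | h'
          · rw [List.getD_append _ _ _ _ (by rw [length_prefixOf]; exact h')]
            exact hz i (by rw [length_prefixOf]; exact h')
          · subst h'
            rw [List.getD_append_right _ _ _ _ (by rw [length_prefixOf])]
            simpa [length_prefixOf] using h
        · exact h
      rw [show prefixOf Z x (n+1) = prefixOf Z x n ++ [!(x n)] from by
        simp only [prefixOf, if_neg hM]]
      refine ⟨z, hzZ, fun i hi => ?_⟩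
      rw [List.length_append, length_prefixOf] at hi
      simp only [List.length_singleton] at hi
      rcases Nat.lt_succ_iff_lt_or_eq.mp (by omega : i < n + 1) with h' | h'
      · rw [List.getD_append _ _ _ _ (by rw [length_prefixOf]; exact h')]
        exact hz i (by rw [length_prefixOf]; exact h')
      · subst h'
        rw [List.getD_append_right _ _ _ _ (by rw [length_prefixOf])]
        simpa [length_prefixOf] using hbit

lemma retr_mem (hZ : IsClosed Z) (hne : Z.Nonempty) (x : ℕ → Bool) : retr Z x ∈ Z := by
  have hcl : retr Z x ∈ closure Z := by
    rw [mem_closure_iff]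
    intro U hUopen hUmem
    obtain ⟨n, hcylsub⟩ := exists_cyl_subset hUopen hUmem
    obtain ⟨z, hzZ, hz⟩ := matches_prefixOf Z hne x n
    refine ⟨z, hcylsub (fun i hi => ?_), hzZ⟩
    rw [hz i (by rw [length_prefixOf]; exact hi)]
    exact prefixOf_getD Z x hi
  rwa [hZ.closure_eq] at hcl

lemma retr_id {z : ℕ → Bool} (hz : z ∈ Z) : retr Z z = z := by
  have key : ∀ n, ∀ i < n, (prefixOf Z z n).getD i false = z i := by
    intro n
    induction n with
    | zero => omega
    | succ n ih =>
      have hM : Matches Z ((prefixOf Z z n) ++ [z n]) := by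
        refine ⟨z, hz, fun i hi => ?_⟩
        rw [List.length_append, length_prefixOf] at hi
        simp only [List.length_singleton] at hi
        rcases Nat.lt_succ_iff_lt_or_eq.mp (by omega : i < n + 1) with h' | h'
        · rw [List.getD_append _ _ _ _ (by rw [length_prefixOf]; exact h')]
          exact (ih i h').symm
        · subst h'
          rw [List.getD_append_right _ _ _ _ (by rw [length_prefixOf])]
          simp [length_prefixOf]
      intro i hi
      rw [show prefixOf Z z (n+1) = prefixOf Z z n ++ [z n] from by
        simp only [prefixOf, if_pos hM]]
      rcases Nat.lt_succ_iff_lt_or_eq.mp hi with h' | h'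
      · rw [List.getD_append _ _ _ _ (by rw [length_prefixOf]; exact h')]
        exact ih i h'
      · subst h'
        rw [List.getD_append_right _ _ _ _ (by rw [length_prefixOf])]
        simp [length_prefixOf]
  funext n
  show (prefixOf Z z (n+1)).getD n false = z n
  exact key (n+1) n (Nat.lt_succ_self n)

lemma prefixOf_congr {x y : ℕ → Bool} : ∀ n, (∀ i < n, x i = y i) →
    prefixOf Z x n = prefixOf Z y n := by
  intro n
  induction n with
  | zero => intro _; rfl
  | succ n ih =>
    intro h
    have hl : prefixOf Z x n = prefixOf Z y n := ih (fun i hi => h i (by omega))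
    show prefixOf Z x n ++ [_] = prefixOf Z y n ++ [_]
    rw [hl, h n (Nat.lt_succ_self n)]

lemma retr_continuous : Continuous (retr Z) := by
  apply continuous_pi
  intro n
  have : IsLocallyConstant (fun x => retr Z x n) := by
    rw [IsLocallyConstant.iff_exists_open]
    intro x
    refine ⟨cyl (n+1) x, isOpen_cyl _ _, self_mem_cyl _ _, fun y hy => ?_⟩
    show (prefixOf Z y (n+1)).getD n false = (prefixOf Z x (n+1)).getD n false
    rw [prefixOf_congr Z (n+1) (fun i hi => (hy i hi).symm)]
  exact this.continuous

end Retract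

end CFanAux
namespace CFanAux

open Set Function Topology Filter

section Binary

/-- the binary value of a 0-1 sequence -/
noncomputable def bval (y : ℕ → Bool) : ℝ :=
  ∑' k, if y k then ((1 : ℝ)/2)^(k+1) else 0

lemma bterm_nonneg (y : ℕ → Bool) (k : ℕ) : 0 ≤ if y k then ((1 : ℝ)/2)^(k+1) else 0 := by
  split <;> positivity

lemma bterm_le (y : ℕ → Bool) (k : ℕ) :
    (if y k then ((1 : ℝ)/2)^(k+1) else 0) ≤ ((1 : ℝ)/2)^(k+1) := by
  split
  · exact le_refl _
  · positivity

lemma summable_half_pow : Summable (fun k : ℕ => ((1 : ℝ)/2)^(k+1)) := by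
  have h : Summable (fun k : ℕ => ((1 : ℝ)/2)^k) := summable_geometric_two
  have := h.mul_left ((1 : ℝ)/2)
  refine this.congr (fun k => ?_)
  rw [pow_succ]
  ring

lemma tsum_half_pow : ∑' k : ℕ, ((1 : ℝ)/2)^(k+1) = 1 := by
  have h := tsum_geometric_two' 1
  have heq : (fun n : ℕ => (1 : ℝ)/2/2^n) = fun k : ℕ => ((1 : ℝ)/2)^(k+1) := by
    funext k
    rw [div_pow, one_pow, pow_succ]
    ring
  rw [heq] at h
  exact h

lemma summable_bterm (y : ℕ → Bool) :
    Summable (fun k => if y k then ((1 : ℝ)/2)^(k+1) else 0) :=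
  Summable.of_nonneg_of_le (bterm_nonneg y) (bterm_le y) summable_half_pow

lemma bval_mem (y : ℕ → Bool) : bval y ∈ unitInterval := by
  constructor
  · exact tsum_nonneg (bterm_nonneg y)
  · calc bval y ≤ ∑' k : ℕ, ((1 : ℝ)/2)^(k+1) :=
        Summable.tsum_le_tsum (bterm_le y) (summable_bterm y) summable_half_pow
      _ = 1 := tsum_half_pow

lemma bval_continuous : Continuous bval := by
  apply continuous_tsum
    (u := fun k : ℕ => ((1 : ℝ)/2)^(k+1))
    (fun k => ?_) summable_half_pow (fun k y => ?_)
  · have : (fun y : ℕ → Bool => if y k then ((1 : ℝ)/2)^(k+1) else 0) =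
        (fun b : Bool => if b then ((1 : ℝ)/2)^(k+1) else 0) ∘ (fun y : ℕ → Bool => y k) := rfl
    rw [this]
    exact continuous_of_discreteTopology.comp (continuous_apply k)
  · rw [Real.norm_eq_abs, abs_of_nonneg (bterm_nonneg y k)]
    exact bterm_le y k

open scoped Classical in
/-- greedy binary digits -/
noncomputable def brem (s : ℝ) : ℕ → ℝ
  | 0 => s
  | k + 1 => brem s k - (if ((1:ℝ)/2)^(k+1) ≤ brem s k then ((1:ℝ)/2)^(k+1) else 0)

open scoped Classical in
noncomputable def bdig (s : ℝ) (k : ℕ) : Bool :=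
  if ((1:ℝ)/2)^(k+1) ≤ brem s k then true else false

open scoped Classical in
lemma brem_bounds {s : ℝ} (h0 : 0 ≤ s) (h1 : s ≤ 1) :
    ∀ k, 0 ≤ brem s k ∧ brem s k ≤ ((1:ℝ)/2)^k := by
  intro k
  induction k with
  | zero => exact ⟨h0, by simpa [brem] using h1⟩
  | succ k ih =>
    show 0 ≤ brem s k - _ ∧ brem s k - _ ≤ _
    by_cases h : ((1:ℝ)/2)^(k+1) ≤ brem s k
    · rw [if_pos h]
      constructor
      · linarith
      · have := ih.2
        rw [pow_succ] at *
        nlinarith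
    · rw [if_neg h]
      push_neg at h
      exact ⟨by linarith [ih.1], by linarith⟩

open scoped Classical in
lemma brem_partial (s : ℝ) (n : ℕ) :
    (∑ i ∈ Finset.range n, if bdig s i then ((1:ℝ)/2)^(i+1) else 0) = s - brem s n := by
  induction n with
  | zero => simp [brem]
  | succ n ih =>
    rw [Finset.sum_range_succ, ih]
    show s - brem s n + (if bdig s n then ((1:ℝ)/2)^(n+1) else 0) =
      s - (brem s n - (if ((1:ℝ)/2)^(n+1) ≤ brem s n then ((1:ℝ)/2)^(n+1) else 0))
    by_cases h : ((1:ℝ)/2)^(n+1) ≤ brem s n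
    · rw [if_pos h, show bdig s n = true from by rw [bdig, if_pos h], if_pos rfl]
      ring
    · rw [if_neg h, show bdig s n = false from by rw [bdig, if_neg h]]
      simp

lemma bval_bdig {s : ℝ} (h0 : 0 ≤ s) (h1 : s ≤ 1) : bval (bdig s) = s := by
  apply HasSum.tsum_eq
  rw [hasSum_iff_tendsto_nat_of_nonneg (bterm_nonneg (bdig s))]
  have heq : (fun n => ∑ i ∈ Finset.range n, if bdig s i then ((1:ℝ)/2)^(i+1) else 0) =
      fun n => s - brem s n := by
    funext n
    exact brem_partial s n
  rw [heq]
  have hrem : Filter.Tendsto (fun n => brem s n) Filter.atTop (nhds 0) := by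
    apply squeeze_zero (fun n => (brem_bounds h0 h1 n).1) (fun n => (brem_bounds h0 h1 n).2)
    exact tendsto_pow_atTop_nhds_zero_of_lt_one (by norm_num) (by norm_num)
  have := Filter.Tendsto.const_sub s hrem
  simpa using this

/-- the canonical continuous surjection from Cantor space onto (Cantor space) × [0,1] -/
noncomputable def qCI (x : ℕ → Bool) : (ℕ → Bool) × unitInterval :=
  (fun n => x (2*n), ⟨bval (fun k => x (2*k+1)), bval_mem _⟩)

lemma qCI_continuous : Continuous qCI := by
  apply Continuous.prodMk
  · exact continuous_pi (fun n => continuous_apply (2*n))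
  · exact Continuous.subtype_mk
      (bval_continuous.comp (continuous_pi (fun k => continuous_apply (2*k+1)))) _

lemma qCI_surjective : Function.Surjective qCI := by
  rintro ⟨a, u⟩
  classical
  refine ⟨fun n => if Even n then a (n/2) else bdig (u : ℝ) (n/2), ?_⟩
  unfold qCI
  refine Prod.ext ?_ ?_
  · funext n
    show (if Even (2*n) then a ((2*n)/2) else _) = a n
    rw [if_pos (even_two_mul n)]
    congr 1
    omega
  · apply Subtype.ext
    show bval (fun k => if Even (2*k+1) then _ else bdig (u:ℝ) ((2*k+1)/2)) = (u : ℝ)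
    have heq : (fun k => if Even (2*k+1) then a ((2*k+1)/2) else bdig (u:ℝ) ((2*k+1)/2)) =
        bdig (u : ℝ) := by
      funext k
      rw [if_neg (by simp [Nat.even_add_one, parity_simps])]
      congr 1
      omega
    rw [heq]
    exact bval_bdig u.2.1 u.2.2

end Binary

end CFanAux
namespace CFanAux

open Set Function Topology Filter

lemma perfect_embed {P : Set (ℕ → Bool)} (hP : Perfect P) (hne : P.Nonempty) :
    ∃ ι : (ℕ → Bool) → (ℕ → Bool), range ι ⊆ P ∧ Continuous ι ∧ Injective ι := by
  letI := TopologicalSpace.upgradeIsCompletelyMetrizable (ℕ → Bool)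
  exact hP.exists_nat_bool_injection hne

/-- every point of X lies below a "top point" of its leg -/
lemma top_exists {X : Set CantorFan} (hXcpt : IsCompact X) {a : ℕ → Bool} {s : unitInterval}
    (hs : mkF (a, s) ∈ X) :
    ∃ h : unitInterval, mkF (a, h) ∈ X ∧ (∀ u : unitInterval, mkF (a, u) ∈ X → u ≤ h) ∧
      s ≤ h := by
  set Sa := (fun u : unitInterval => (u : ℝ)) '' {u | mkF (a, u) ∈ X} with hSa
  have hclosed : IsClosed {u : unitInterval | mkF (a, u) ∈ X} := by
    have : {u : unitInterval | mkF (a, u) ∈ X} =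
        (fun u : unitInterval => mkF (a, u)) ⁻¹' X := rfl
    rw [this]
    exact hXcpt.isClosed.preimage (continuous_mkF.comp (Continuous.prodMk_right a))
  have hcpt : IsCompact Sa := (hclosed.isCompact).image continuous_subtype_val
  have hne : Sa.Nonempty := ⟨s, ⟨s, hs, rfl⟩⟩
  have hmem : sSup Sa ∈ Sa := hcpt.sSup_mem hne
  obtain ⟨h, hhX, hhsup⟩ := hmem
  have hh' : (h : ℝ) = sSup Sa := hhsup
  refine ⟨h, hhX, fun u hu => ?_, ?_⟩
  · have hle : (u : ℝ) ≤ sSup Sa := le_csSup hcpt.bddAbove ⟨u, hu, rfl⟩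
    rw [← hh'] at hle
    exact Subtype.coe_le_coe.mp hle
  · have hle : (s : ℝ) ≤ sSup Sa := le_csSup hcpt.bddAbove ⟨s, hs, rfl⟩
    rw [← hh'] at hle
    exact Subtype.coe_le_coe.mp hle

end CFanAux


open CFanAux Set Function Topology in
/-- Every smooth fan is a continuous image of the Lelek fan, via a map that is
monotone on segments. -/
theorem lelekFan_projectively_universal (L X : Set CantorFan)
    (hL : IsLelekFan L) (hX : IsSmoothFan X) :
    ∃ f : ↥L → ↥X, Continuous f ∧ Function.Surjective f ∧ MonotoneOnSegments L X f := by
  obtain ⟨hLnt, hLcpt, hLconn, hLdense⟩ := hL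
  obtain ⟨hXnt, hXcpt, hXconn, hXnh⟩ := hX
  -- segment-closedness of X and L
  have hsegX : ∀ (a : ℕ → Bool) (t s : unitInterval), mkF (a, t) ∈ X → s ≤ t →
      mkF (a, s) ∈ X := fun a t s h hst =>
    seg_closed hXcpt hXconn (notleg_of_not_homeo hXnt hXcpt hXconn hXnh) h hst
  have hsegL : ∀ (a : ℕ → Bool) (t s : unitInterval), mkF (a, t) ∈ L → s ≤ t →
      mkF (a, s) ∈ L := fun a t s h hst =>
    seg_closed hLcpt hLconn (notleg_of_dense_endpoints hLnt hLcpt hLconn hLdense) h hst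
  -- a point of L distinct from the top
  obtain ⟨p₁, hp₁, p₂, hp₂, hpne⟩ := hLnt
  have hex : ∃ p ∈ L, p ≠ fanTop := by
    by_cases h : p₁ = fanTop
    · exact ⟨p₂, hp₂, fun hc => hpne (h.trans hc.symm)⟩
    · exact ⟨p₁, hp₁, h⟩
  obtain ⟨p, hpL, hptop⟩ := hex
  obtain ⟨cs, ts, rfl⟩ := exists_rep p
  have hts : 0 < (ts : ℝ) := by
    rcases eq_or_lt_of_le ts.2.1 with h | h
    · exact absurd (mk_eq_top.mpr (Subtype.ext h.symm)) hptop
    · exact h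
  set δ : ℝ := (ts : ℝ) / 2 with hδdef
  have hδpos : 0 < δ := by simp only [hδdef]; linarith
  have hδ1 : δ ≤ 1 := by have := ts.2.2; simp only [hδdef]; linarith
  set δI : unitInterval := ⟨δ, le_of_lt hδpos, hδ1⟩ with hδI
  -- the tall legs of L
  set Qset := {c : ℕ → Bool | ∃ t : unitInterval, δ < (t : ℝ) ∧ mkF (c, t) ∈ L} with hQset
  have hQne : cs ∈ Qset := ⟨ts, by simp only [hδdef]; linarith, hpL⟩
  have hQperf : Perfect (closure Qset) :=
    (tall_preperfect hLdense hsegL hδpos).perfect_closure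
  have hPne : (closure Qset).Nonempty := ⟨cs, subset_closure hQne⟩
  have hPtall : ∀ c ∈ closure Qset, mkF (c, δI) ∈ L := by
    have hZclosed : IsClosed {c : ℕ → Bool | mkF (c, δI) ∈ L} :=
      hLcpt.isClosed.preimage (continuous_mkF.comp (continuous_id.prodMk continuous_const))
    have hsub : Qset ⊆ {c : ℕ → Bool | mkF (c, δI) ∈ L} := by
      rintro c ⟨t, hδt, htL⟩
      exact hsegL c t δI htL (le_of_lt hδt)
    exact fun c hc => closure_minimal hsub hZclosed hc
  -- embed the Cantor set into the tall legs
  obtain ⟨ι, hιP, hιcont, hιinj⟩ := perfect_embed hQperf hPne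
  set K := Set.range ι with hK
  have hKcpt : IsCompact K := isCompact_range hιcont
  have hKclosed : IsClosed K := hKcpt.isClosed
  have hKne : K.Nonempty := ⟨ι cs, cs, rfl⟩
  let heq : (ℕ → Bool) ≃ ↥K := Equiv.ofInjective ι hιinj
  have hecont : Continuous (heq : (ℕ → Bool) → ↥K) :=
    Continuous.subtype_mk hιcont _
  let e : (ℕ → Bool) ≃ₜ ↥K := Continuous.homeoOfEquivCompactToT2 (f := heq) hecont
  -- the top of X
  set TOPX := {p : (ℕ → Bool) × unitInterval | mkF p ∈ X ∧
    ∀ u : unitInterval, mkF (p.1, u) ∈ X → u ≤ p.2} with hTOPX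
  set MX := closure TOPX with hMX
  have hXtclosed : IsClosed {p : (ℕ → Bool) × unitInterval | mkF p ∈ X} :=
    hXcpt.isClosed.preimage continuous_mkF
  have hMXsub : MX ⊆ {p : (ℕ → Bool) × unitInterval | mkF p ∈ X} :=
    closure_minimal (fun p hp => hp.1) hXtclosed
  have hMXclosed : IsClosed MX := isClosed_closure
  have hMXne : MX.Nonempty := by
    obtain ⟨x, hx, -, -, -⟩ := hXnt
    obtain ⟨a, s, rfl⟩ := exists_rep x
    obtain ⟨h, hhX, hhtop, -⟩ := top_exists hXcpt hx
    exact ⟨(a, h), subset_closure ⟨hhX, hhtop⟩⟩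
  -- the preimage of MX under the canonical surjection
  set S' := qCI ⁻¹' MX with hS'
  have hS'closed : IsClosed S' := hMXclosed.preimage qCI_continuous
  have hS'ne : S'.Nonempty := by
    obtain ⟨mm, hmm⟩ := hMXne
    obtain ⟨y, hy⟩ := qCI_surjective mm
    exact ⟨y, by rw [Set.mem_preimage, hy]; exact hmm⟩
  -- the map Φ
  have hrKmem : ∀ c, retr K c ∈ K := retr_mem K hKclosed hKne
  let Φ : (ℕ → Bool) → (ℕ → Bool) × unitInterval :=
    fun c => qCI (retr S' (e.symm ⟨retr K c, hrKmem c⟩))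
  have hΦcont : Continuous Φ := by
    apply qCI_continuous.comp
    apply (retr_continuous S').comp
    exact e.symm.continuous.comp (Continuous.subtype_mk (retr_continuous K) _)
  have hΦMX : ∀ c, Φ c ∈ MX := fun c => retr_mem S' hS'closed hS'ne _
  have hΦX : ∀ c, mkF ((Φ c).1, (Φ c).2) ∈ X := fun c => hMXsub (hΦMX c)
  have hcover : ∀ p ∈ TOPX, ∃ c, mkF (c, δI) ∈ L ∧ Φ c = p := by
    intro p hp
    obtain ⟨y, hy⟩ := qCI_surjective p
    have hyS' : y ∈ S' := by rw [Set.mem_preimage, hy]; exact subset_closure hp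
    refine ⟨ι y, hPtall _ (hιP ⟨y, rfl⟩), ?_⟩
    have h1 : retr K (ι y) = ι y := retr_id K ⟨y, rfl⟩
    have h2 : (⟨retr K (ι y), hrKmem (ι y)⟩ : ↥K) = e y := Subtype.ext h1
    show qCI (retr S' (e.symm ⟨retr K (ι y), hrKmem (ι y)⟩)) = p
    rw [h2, Homeomorph.symm_apply_apply, retr_id S' hyS', hy]
  -- the height compression map and F
  have hminmem : ∀ (c : ℕ → Bool) (t : unitInterval),
      min ((t : ℝ) / δ) ((Φ c).2 : ℝ) ∈ unitInterval := by
    intro c t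
    constructor
    · exact le_min (div_nonneg t.2.1 (le_of_lt hδpos)) (Φ c).2.2.1
    · exact le_trans (min_le_right _ _) (Φ c).2.2.2
  let F : CantorFan → CantorFan := Quotient.lift
    (fun p : (ℕ → Bool) × unitInterval =>
      mkF ((Φ p.1).1, ⟨min ((p.2 : ℝ) / δ) ((Φ p.1).2 : ℝ), hminmem p.1 p.2⟩))
    (by
      rintro p q (rfl | ⟨h1, h2⟩)
      · rfl
      · have e1 : (p.2 : ℝ) = 0 := by rw [h1]; rfl
        have e2 : (q.2 : ℝ) = 0 := by rw [h2]; rfl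
        apply Quotient.sound
        refine Or.inr ⟨Subtype.ext ?_, Subtype.ext ?_⟩
        · show min ((p.2 : ℝ) / δ) _ = 0
          rw [e1, zero_div]
          exact min_eq_left (Φ p.1).2.2.1
        · show min ((q.2 : ℝ) / δ) _ = 0
          rw [e2, zero_div]
          exact min_eq_left (Φ q.1).2.2.1)
  have hFmk : ∀ (c : ℕ → Bool) (t : unitInterval),
      F (mkF (c, t)) = mkF ((Φ c).1, ⟨min ((t : ℝ) / δ) ((Φ c).2 : ℝ), hminmem c t⟩) :=
    fun c t => rfl
  have hFcont : Continuous F := by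
    apply Continuous.quotient_lift
    apply continuous_mkF.comp
    apply Continuous.prodMk
    · exact continuous_fst.comp (hΦcont.comp continuous_fst)
    · apply Continuous.subtype_mk
      apply Continuous.min
      · exact (continuous_subtype_val.comp continuous_snd).div_const δ
      · exact continuous_subtype_val.comp (continuous_snd.comp (hΦcont.comp continuous_fst))
  have hFX : ∀ z : CantorFan, F z ∈ X := by
    intro z
    obtain ⟨c, t, rfl⟩ := exists_rep z
    rw [hFmk]
    apply hsegX _ (Φ c).2 _ (hΦX c)
    show min ((t : ℝ) / δ) ((Φ c).2 : ℝ) ≤ ((Φ c).2 : ℝ)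
    exact min_le_right _ _
  -- the map f
  refine ⟨fun z => ⟨F z.1, hFX z.1⟩, ?_, ?_, ?_, ?_⟩
  · exact Continuous.subtype_mk (hFcont.comp continuous_subtype_val) _
  · -- surjectivity
    rintro ⟨x, hx⟩
    obtain ⟨a, s, rfl⟩ := exists_rep x
    obtain ⟨h, hhX, hhtop, hsh⟩ := top_exists hXcpt hx
    obtain ⟨c, hcL, hΦc⟩ := hcover (a, h) ⟨hhX, hhtop⟩
    have hδs : δ * (s : ℝ) ∈ unitInterval := by
      constructor
      · exact mul_nonneg (le_of_lt hδpos) s.2.1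
      · calc δ * (s : ℝ) ≤ δ * 1 := mul_le_mul_of_nonneg_left s.2.2 (le_of_lt hδpos)
          _ ≤ 1 := by linarith
    have hzL : mkF (c, ⟨δ * (s : ℝ), hδs⟩) ∈ L := by
      apply hsegL c δI _ hcL
      show δ * (s : ℝ) ≤ δ
      calc δ * (s : ℝ) ≤ δ * 1 := mul_le_mul_of_nonneg_left s.2.2 (le_of_lt hδpos)
        _ = δ := mul_one δ
    refine ⟨⟨_, hzL⟩, ?_⟩
    apply Subtype.ext
    show F (mkF (c, ⟨δ * (s : ℝ), hδs⟩)) = mkF (a, s)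
    rw [hFmk]
    have hd1 : (Φ c).1 = a := by rw [hΦc]
    have hd2 : ((Φ c).2 : ℝ) = (h : ℝ) := by rw [hΦc]
    have hval : min ((δ * (s : ℝ)) / δ) ((Φ c).2 : ℝ) = (s : ℝ) := by
      rw [hd2, mul_div_cancel_left₀ _ (ne_of_gt hδpos)]
      exact min_eq_left hsh
    rw [hd1]
    exact congrArg (fun v : unitInterval => mkF (a, v)) (Subtype.ext hval)
  · -- f(top) = top
    intro hv
    show F fanTop = fanTop
    have h3 : F fanTop = mkF ((Φ (fun _ => false)).1,
        ⟨min (((0 : unitInterval) : ℝ) / δ) ((Φ (fun _ => false)).2 : ℝ),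
          hminmem (fun _ => false) 0⟩) := hFmk (fun _ => false) 0
    rw [h3, mk_eq_top]
    apply Subtype.ext
    show min (((0 : unitInterval) : ℝ) / δ) _ = 0
    rw [show ((0 : unitInterval) : ℝ) = 0 from rfl, zero_div]
    exact min_eq_left (Φ (fun _ => false)).2.2.1
  · -- monotone on segments
    rintro x y ⟨c, t, hyt, s, hst, hxs⟩
    refine ⟨(Φ c).1, ⟨min ((t : ℝ) / δ) ((Φ c).2 : ℝ), hminmem c t⟩, ?_,
      ⟨min ((s : ℝ) / δ) ((Φ c).2 : ℝ), hminmem c s⟩, ?_, ?_⟩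
    · show mkF ((Φ c).1, _) = F ↑y
      rw [← hyt]
      exact (hFmk c t).symm
    · show min ((s : ℝ) / δ) ((Φ c).2 : ℝ) ≤ min ((t : ℝ) / δ) ((Φ c).2 : ℝ)
      exact min_le_min ((div_le_div_iff_of_pos_right hδpos).mpr (Subtype.coe_le_coe.mpr hst)) (le_refl _)
    · show F ↑x = mkF ((Φ c).1, _)
      rw [hxs]
      exact hFmk c s
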